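/- Let α₁ ≥ α₂ ≥ α₃ ≥ 0 and γ₁ ≥ γ₂ ≥ 0 be real numbers, and set α₄ = 0, γ₃ = 0. Then there exists c ∈ ℝ with α_{i+1} ≤ γ_i + c ≤ α_i for i = 1, 2, 3 if and only if all of the following hold: α₂ − α₃ ≤ γ₁ ≤ α₁, 0 ≤ γ₂ ≤ α₂, and 0 ≤ γ₁ − γ₂ ≤ α₁ − α₃. -/
import Mathlib

/-- the support polytope (eq. (16) of the paper) of the modified orbital
integral `K̄(α;γ)` for `n = 4`, with `α = (a1,a2,a3,0)` and `γ = (g1,g2,0)`. -/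
theorem stmt_17 (a1 a2 a3 g1 g2 : ℝ)
    (h12 : a2 ≤ a1) (h23 : a3 ≤ a2) (h3 : 0 ≤ a3) (hg : g2 ≤ g1) (hg2 : 0 ≤ g2) :
    (∃ c : ℝ, (a2 ≤ g1 + c ∧ g1 + c ≤ a1) ∧ (a3 ≤ g2 + c ∧ g2 + c ≤ a2) ∧
        (0 ≤ c ∧ c ≤ a3)) ↔
      (a2 - a3 ≤ g1 ∧ g1 ≤ a1) ∧ (0 ≤ g2 ∧ g2 ≤ a2) ∧
        (0 ≤ g1 - g2 ∧ g1 - g2 ≤ a1 - a3) := by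
  constructor
  · rintro ⟨c, ⟨h1, h2⟩, ⟨h3', h4⟩, h5, h6⟩
    refine ⟨⟨by linarith, by linarith⟩, ⟨hg2, by linarith⟩, by linarith, by linarith⟩
  · rintro ⟨⟨k1, k2⟩, ⟨k3, k4⟩, k5, k6⟩
    set M := max 0 (max (a2 - g1) (a3 - g2)) with hM
    have hM1 : (0:ℝ) ≤ M := le_max_left _ _
    have hM2 : a2 - g1 ≤ M := le_trans (le_max_left _ _) (le_max_right _ _)
    have hM3 : a3 - g2 ≤ M := le_trans (le_max_right _ _) (le_max_right _ _)
    have hMa : M ≤ a1 - g1 := max_le (by linarith) (max_le (by linarith) (by linarith))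
    have hMb : M ≤ a2 - g2 := max_le (by linarith) (max_le (by linarith) (by linarith))
    have hMle : M ≤ a3 := max_le h3 (max_le (by linarith) (by linarith))
    exact ⟨M, ⟨by linarith, by linarith⟩, ⟨by linarith, by linarith⟩, hM1, hMle⟩
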